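/- If in a braid word β the classical crossings x, x' form a bigon and x, x'' also form a bigon (sharing the crossing x), then the braid words β' and β'' obtained by the two respective bigon reductions are strongly equivalent. -/

import Mathlib

set_option maxHeartbeats 1000000

namespace OneTermBracket

/-- Letters (generators) of free braid words on `n` strands:
`zeta i` is a classical crossing, `tau i` a virtual crossing, `1 ≤ i+1 ≤ n-1`. -/
inductive Letter (n : ℕ) where
  | zeta (i : Fin (n-1))
  | tau  (i : Fin (n-1))
deriving DecidableEq

namespace Letter

def idx {n : ℕ} : Letter n → Fin (n-1)
  | zeta i => i
  | tau i => i

def isZeta {n : ℕ} : Letter n → Bool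
  | zeta _ => true
  | tau _ => false

end Letter

def lo {n : ℕ} (i : Fin (n-1)) : Fin n := ⟨i.1, by have := i.2; omega⟩
def hi {n : ℕ} (i : Fin (n-1)) : Fin n := ⟨i.1 + 1, by have := i.2; omega⟩

/-- The transposition `(i, i+1)` of `{1, …, n}`. -/
def sPerm {n : ℕ} (i : Fin (n-1)) : Equiv.Perm (Fin n) := Equiv.swap (lo i) (hi i)

/-- Each letter acts on positions as the transposition `(i, i+1)`. -/
def transOf {n : ℕ} (g : Letter n) : Equiv.Perm (Fin n) := sPerm g.idx

/-- The permutation realized by the prefix of length `j` of a braid word,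
mapping the top label of a strand to its position at level `j`. -/
def prefPerm {n : ℕ} (w : List (Letter n)) (j : ℕ) : Equiv.Perm (Fin n) :=
  (((w.take j).map transOf).reverse).prod

/-- The permutation `P(β)` of a braid word (top endpoint `k` goes to bottom endpoint `P k`). -/
def permOf {n : ℕ} (w : List (Letter n)) : Equiv.Perm (Fin n) :=
  ((w.map transOf).reverse).prod

/-- The unordered pair of (top labels of the) strands crossing at position `j` of `w`. -/
def strandsAt {n : ℕ} (w : List (Letter n)) (j : ℕ) : Option (Sym2 (Fin n)) :=
  (w[j]?).map fun g => s((prefPerm w j)⁻¹ (lo g.idx), (prefPerm w j)⁻¹ (hi g.idx))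

/-- Component-wise parity determined by a partition `{1,…,n} = N₁ ⊔ N₂` (encoded by
`c : Fin n → Bool`): a classical crossing is odd (`1`) iff its two strands lie in
different parts. Non-classical positions get `0`. -/
def cwParity {n : ℕ} (c : Fin n → Bool) (w : List (Letter n)) (j : ℕ) : ZMod 2 :=
  match w[j]? with
  | some (.zeta i) =>
      if c ((prefPerm w j)⁻¹ (lo i)) = c ((prefPerm w j)⁻¹ (hi i)) then 0 else 1
  | _ => 0

/-- The defining relations of `F_n` and `FB_n` which do not involve
`ζ_i² = 1` or the classical third Reidemeister move ("strong" moves). -/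
inductive RelStrong (n : ℕ) : List (Letter n) → List (Letter n) → Prop
  | tt (i : Fin (n-1)) : RelStrong n [.tau i, .tau i] []
  | virt (i : Fin (n-1)) : RelStrong n [.zeta i, .tau i] [.tau i, .zeta i]
  | far_zz (i j : Fin (n-1)) (h : 2 ≤ Nat.dist i j) :
      RelStrong n [.zeta i, .zeta j] [.zeta j, .zeta i]
  | far_zt (i j : Fin (n-1)) (h : 2 ≤ Nat.dist i j) :
      RelStrong n [.zeta i, .tau j] [.tau j, .zeta i]
  | far_tt (i j : Fin (n-1)) (h : 2 ≤ Nat.dist i j) :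
      RelStrong n [.tau i, .tau j] [.tau j, .tau i]
  | r3v (i j : Fin (n-1)) (h : (j:ℕ) = (i:ℕ) + 1) :
      RelStrong n [.tau i, .tau j, .tau i] [.tau j, .tau i, .tau j]
  | semi (i j : Fin (n-1)) (h : (j:ℕ) = (i:ℕ) + 1) :
      RelStrong n [.tau i, .tau j, .zeta i] [.zeta j, .tau i, .tau j]

/-- The defining relations of `F_n`. -/
inductive RelF (n : ℕ) : List (Letter n) → List (Letter n) → Prop
  | strong {r1 r2} : RelStrong n r1 r2 → RelF n r1 r2
  | zz (i : Fin (n-1)) : RelF n [.zeta i, .zeta i] []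

/-- The defining relations of the free braid group `FB_n`. -/
inductive RelFB (n : ℕ) : List (Letter n) → List (Letter n) → Prop
  | ofF {r1 r2} : RelF n r1 r2 → RelFB n r1 r2
  | r3c (i j : Fin (n-1)) (h : (j:ℕ) = (i:ℕ) + 1) :
      RelFB n [.zeta i, .zeta j, .zeta i] [.zeta j, .zeta i, .zeta j]

/-- One application of a relation from `R` inside a word. -/
def StepOf {n : ℕ} (R : List (Letter n) → List (Letter n) → Prop)
    (w1 w2 : List (Letter n)) : Prop :=
  ∃ A B r1 r2, R r1 r2 ∧ w1 = A ++ r1 ++ B ∧ w2 = A ++ r2 ++ B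

/-- Strong equivalence: all moves of `F_n` except `ζ_i² = 1`. -/
def StrongEq {n : ℕ} (w1 w2 : List (Letter n)) : Prop :=
  Relation.EqvGen (StepOf (RelStrong n)) w1 w2

/-- Equivalence of braid words as elements of `F_n`. -/
def EqF {n : ℕ} (w1 w2 : List (Letter n)) : Prop :=
  Relation.EqvGen (StepOf (RelF n)) w1 w2

/-- Equivalence of braid words as elements of the free braid group `FB_n`. -/
def EqFB {n : ℕ} (w1 w2 : List (Letter n)) : Prop :=
  Relation.EqvGen (StepOf (RelFB n)) w1 w2

/-- The parity axioms, for a parity `P` defined on the class `C` of braid words.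
`P w j` is the parity of the crossing at position `j` of `w` (only classical
positions matter). -/
structure IsParity {n : ℕ} (C : List (Letter n) → Prop)
    (P : List (Letter n) → ℕ → ZMod 2) : Prop where
  /-- Crossings not taking part in a relation keep their parity (part before). -/
  untouched_left : ∀ A B r1 r2, RelFB n r1 r2 →
    C (A ++ r1 ++ B) → C (A ++ r2 ++ B) → ∀ j < A.length,
    P (A ++ r1 ++ B) j = P (A ++ r2 ++ B) j
  /-- Crossings not taking part in a relation keep their parity (part after). -/
  untouched_right : ∀ A B r1 r2, RelFB n r1 r2 →
    C (A ++ r1 ++ B) → C (A ++ r2 ++ B) → ∀ j < B.length,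
    P (A ++ r1 ++ B) (A.length + r1.length + j) = P (A ++ r2 ++ B) (A.length + r2.length + j)
  /-- In commutation-type relations (far commutativity, virtualization), the two
  letters keep their parities. -/
  comm : ∀ A B x y, RelFB n [x, y] [y, x] →
    C (A ++ [x, y] ++ B) → C (A ++ [y, x] ++ B) →
    P (A ++ [x, y] ++ B) A.length = P (A ++ [y, x] ++ B) (A.length + 1) ∧
    P (A ++ [x, y] ++ B) (A.length + 1) = P (A ++ [y, x] ++ B) A.length
  /-- In a classical second Reidemeister move both crossings have the same parity. -/
  r2c : ∀ A B (i : Fin (n-1)),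
    C (A ++ [.zeta i, .zeta i] ++ B) → C (A ++ B) →
    P (A ++ [.zeta i, .zeta i] ++ B) A.length
      = P (A ++ [.zeta i, .zeta i] ++ B) (A.length + 1)
  /-- In a semivirtual move, the classical crossing keeps its parity. -/
  semiv : ∀ A B (i j : Fin (n-1)), (j:ℕ) = (i:ℕ) + 1 →
    C (A ++ [.tau i, .tau j, .zeta i] ++ B) →
    C (A ++ [.zeta j, .tau i, .tau j] ++ B) →
    P (A ++ [.tau i, .tau j, .zeta i] ++ B) (A.length + 2)
      = P (A ++ [.zeta j, .tau i, .tau j] ++ B) A.length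
  /-- In a classical third Reidemeister move the number of odd crossings is even. -/
  r3_even : ∀ A B (i j : Fin (n-1)), (j:ℕ) = (i:ℕ) + 1 →
    C (A ++ [.zeta i, .zeta j, .zeta i] ++ B) →
    C (A ++ [.zeta j, .zeta i, .zeta j] ++ B) →
    P (A ++ [.zeta i, .zeta j, .zeta i] ++ B) A.length
      + P (A ++ [.zeta i, .zeta j, .zeta i] ++ B) (A.length + 1)
      + P (A ++ [.zeta i, .zeta j, .zeta i] ++ B) (A.length + 2) = 0
  /-- In a classical third Reidemeister move, upper/middle/lower crossings on the
  left correspond to lower/middle/upper crossings on the right with equal parities. -/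
  r3_corr : ∀ A B (i j : Fin (n-1)), (j:ℕ) = (i:ℕ) + 1 →
    C (A ++ [.zeta i, .zeta j, .zeta i] ++ B) →
    C (A ++ [.zeta j, .zeta i, .zeta j] ++ B) →
    P (A ++ [.zeta i, .zeta j, .zeta i] ++ B) A.length
      = P (A ++ [.zeta j, .zeta i, .zeta j] ++ B) (A.length + 2) ∧
    P (A ++ [.zeta i, .zeta j, .zeta i] ++ B) (A.length + 1)
      = P (A ++ [.zeta j, .zeta i, .zeta j] ++ B) (A.length + 1) ∧
    P (A ++ [.zeta i, .zeta j, .zeta i] ++ B) (A.length + 2)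
      = P (A ++ [.zeta j, .zeta i, .zeta j] ++ B) A.length

/-- Delete from `w` all classical letters whose parity (given by `par`) is even. -/
def deleteEven {n : ℕ} (w : List (Letter n)) (par : ℕ → ZMod 2) : List (Letter n) :=
  (List.range w.length).filterMap fun j =>
    (w[j]?).bind fun g =>
      match g with
      | .zeta i => if par j = 0 then none else some (.zeta i)
      | .tau i => some (.tau i)

/-- The one-term parity bracket: delete all even classical crossings. -/
def bracket {n : ℕ} (P : List (Letter n) → ℕ → ZMod 2) (w : List (Letter n)) :
    List (Letter n) :=
  deleteEven w (P w)

/-- Positions of classical crossings of a word. -/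
def ZetaPos {n : ℕ} (w : List (Letter n)) : Set ℕ :=
  {j | ∃ i, w[j]? = some (Letter.zeta i)}

/-- The classical crossings at positions `j1 < j2` form a bigon: they lie on the same
pair of strands, and no classical crossing between them lies on either of those strands. -/
def IsBigon {n : ℕ} (w : List (Letter n)) (j1 j2 : ℕ) : Prop :=
  j1 < j2 ∧ j1 ∈ ZetaPos w ∧ j2 ∈ ZetaPos w ∧
  strandsAt w j1 = strandsAt w j2 ∧
  ∀ k, j1 < k → k < j2 → k ∈ ZetaPos w →
    ∀ e e', strandsAt w j1 = some e → strandsAt w k = some e' → ∀ a ∈ e, a ∉ e'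

/-- Delete the letters at two given positions. -/
def delete2 {n : ℕ} (w : List (Letter n)) (j1 j2 : ℕ) : List (Letter n) :=
  (w.eraseIdx (max j1 j2)).eraseIdx (min j1 j2)

/-- One bigon reduction. -/
def BigonStep {n : ℕ} (w w' : List (Letter n)) : Prop :=
  ∃ j1 j2, IsBigon w j1 j2 ∧ w' = delete2 w j1 j2

/-- A word is irreducible if it admits no bigon reduction. -/
def Irreducible {n : ℕ} (w : List (Letter n)) : Prop := ¬ ∃ j1 j2, IsBigon w j1 j2

/-- Number of classical letters of a word. -/
def countZeta {n : ℕ} (w : List (Letter n)) : ℕ := (w.filter Letter.isZeta).length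

/-- `φ` is an isomorphism of the decorated graphs `Γ(w1) ≅ Γ(w2)`, encoded
combinatorially: a bijection of classical crossings preserving the pair of strands
through each crossing, the order of crossings along each strand, and the endpoint
structure (the permutation). -/
structure IsGammaIso {n : ℕ} (w1 w2 : List (Letter n)) (φ : ℕ → ℕ) : Prop where
  maps : ∀ j ∈ ZetaPos w1, φ j ∈ ZetaPos w2
  inj : ∀ j ∈ ZetaPos w1, ∀ j' ∈ ZetaPos w1, φ j = φ j' → j = j'
  surj : ∀ k ∈ ZetaPos w2, ∃ j ∈ ZetaPos w1, φ j = k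
  strands : ∀ j ∈ ZetaPos w1, strandsAt w2 (φ j) = strandsAt w1 j
  order : ∀ j ∈ ZetaPos w1, ∀ j' ∈ ZetaPos w1, j < j' →
    (∃ e e' a, strandsAt w1 j = some e ∧ strandsAt w1 j' = some e' ∧ a ∈ e ∧ a ∈ e') →
    φ j < φ j'
  perm : permOf w1 = permOf w2

/-! ### The groups `F_n` and `FB_n` as presented groups -/

/-- Generators: `Sum.inl i` is the classical generator `ζ_i`,
`Sum.inr i` is the virtual generator `τ_i`. -/
abbrev GGen (n : ℕ) := Fin (n-1) ⊕ Fin (n-1)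

def zg {n : ℕ} (i : Fin (n-1)) : FreeGroup (GGen n) := FreeGroup.of (Sum.inl i)
def tg {n : ℕ} (i : Fin (n-1)) : FreeGroup (GGen n) := FreeGroup.of (Sum.inr i)

/-- The relators of `F_n`. -/
def FRels (n : ℕ) : Set (FreeGroup (GGen n)) :=
  (⋃ i, {zg i * zg i}) ∪ (⋃ i, {tg i * tg i}) ∪
  (⋃ i, {zg i * tg i * (tg i * zg i)⁻¹}) ∪
  (⋃ (i : Fin (n-1)) (j : Fin (n-1)) (_ : 2 ≤ Nat.dist i j),
    {zg i * zg j * (zg j * zg i)⁻¹, zg i * tg j * (tg j * zg i)⁻¹,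
     tg i * tg j * (tg j * tg i)⁻¹}) ∪
  (⋃ (i : Fin (n-1)) (j : Fin (n-1)) (_ : (j:ℕ) = (i:ℕ) + 1),
    {tg i * tg j * tg i * (tg j * tg i * tg j)⁻¹,
     tg i * tg j * zg i * (zg j * tg i * tg j)⁻¹})

/-- The relators of `FB_n`: those of `F_n` together with the classical third
Reidemeister relation. -/
def FBRels (n : ℕ) : Set (FreeGroup (GGen n)) :=
  FRels n ∪
  (⋃ (i : Fin (n-1)) (j : Fin (n-1)) (_ : (j:ℕ) = (i:ℕ) + 1),
    {zg i * zg j * zg i * (zg j * zg i * zg j)⁻¹})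

/-- The group `F_n`. -/
abbrev FGrp (n : ℕ) := PresentedGroup (FRels n)

/-- The free braid group `FB_n`. -/
abbrev FBGrp (n : ℕ) := PresentedGroup (FBRels n)

def zF {n : ℕ} (i : Fin (n-1)) : FGrp n := PresentedGroup.of (Sum.inl i)
def tF {n : ℕ} (i : Fin (n-1)) : FGrp n := PresentedGroup.of (Sum.inr i)

/-- Evaluation of a braid word in `F_n`. -/
def evalF {n : ℕ} (w : List (Letter n)) : FGrp n :=
  (w.map fun g => match g with
    | Letter.zeta i => zF i
    | Letter.tau i => tF i).prod

/-- For each unordered pair of strands, the mod-2 number of classical letters of `w`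
at which these two strands cross (strand labels traced from the top). -/
def crossPar {n : ℕ} : List (Letter n) → Sym2 (Fin n) → ZMod 2
  | [], _ => 0
  | g :: rest, e =>
    (match g with
     | Letter.zeta i => if e = s(lo i, hi i) then (1 : ZMod 2) else 0
     | Letter.tau _ => 0) + crossPar rest (e.map (transOf g))

/-! ### Chord diagrams and the Gaussian parity -/

/-- The setoid on strands given by `SameCycle`; its classes are the orbits of `σ`,
i.e. the components of the closure. -/
def sameCycleSetoid {n : ℕ} (σ : Equiv.Perm (Fin n)) : Setoid (Fin n) :=
  ⟨σ.SameCycle, ⟨Equiv.Perm.SameCycle.refl σ, Equiv.Perm.SameCycle.symm,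
    Equiv.Perm.SameCycle.trans⟩⟩

/-- The rank of a strand in the single cycle of `σ` starting from strand `0`. -/
noncomputable def rankIn {n : ℕ} [NeZero n] (σ : Equiv.Perm (Fin n)) (a : Fin n) : ℕ :=
  ((Function.invFun (fun k : Fin n => (σ ^ (k : ℕ)) 0) a : Fin n) : ℕ)

/-- Coordinates on the core circle of the two endpoints of the chord of the classical
crossing at position `j` (the circle traverses the strands in the cyclic order of `σ`). -/
noncomputable def chordEnds {n : ℕ} [NeZero n] (w : List (Letter n))
    (σ : Equiv.Perm (Fin n)) (j : ℕ) : ℕ × ℕ :=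
  match w[j]? with
  | some (Letter.zeta i) =>
      (rankIn σ ((prefPerm w j)⁻¹ (lo i)) * w.length + j,
       rankIn σ ((prefPerm w j)⁻¹ (hi i)) * w.length + j)
  | _ => (0, 0)

/-- Two chords are linked iff the endpoints of one separate the endpoints of the
other on the core circle. -/
def LinkedChords {n : ℕ} [NeZero n] (w : List (Letter n)) (σ : Equiv.Perm (Fin n))
    (j k : ℕ) : Prop :=
  Xor' (min (chordEnds w σ j).1 (chordEnds w σ j).2 < (chordEnds w σ k).1 ∧
        (chordEnds w σ k).1 < max (chordEnds w σ j).1 (chordEnds w σ j).2)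
       (min (chordEnds w σ j).1 (chordEnds w σ j).2 < (chordEnds w σ k).2 ∧
        (chordEnds w σ k).2 < max (chordEnds w σ j).1 (chordEnds w σ j).2)

/-- The Gaussian parity of the classical crossing at position `j`: the mod-2 number
of chords linked with its chord. Even (`0`) iff linked with evenly many chords. -/
noncomputable def gaussParity {n : ℕ} [NeZero n] (w : List (Letter n))
    (σ : Equiv.Perm (Fin n)) (j : ℕ) : ZMod 2 :=
  (Nat.card {k : ℕ // k < w.length ∧ k ∈ ZetaPos w ∧ k ≠ j ∧ LinkedChords w σ j k} : ZMod 2)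


/-! ### Part 1: the quotient monoid of words modulo strong equivalence -/

set_option linter.dupNamespace false

variable {n : ℕ}

lemma StrongEq.rfl {w : List (Letter n)} : StrongEq w w := Relation.EqvGen.refl w

lemma StrongEq.symm' {u v : List (Letter n)} (h : StrongEq u v) : StrongEq v u :=
  Relation.EqvGen.symm u v h

lemma StrongEq.trans' {u v w : List (Letter n)} (h : StrongEq u v) (h' : StrongEq v w) :
    StrongEq u w := Relation.EqvGen.trans u v w h h'

lemma StepOf.conj {R : List (Letter n) → List (Letter n) → Prop} {u v : List (Letter n)}
    (h : StepOf R u v) (X Y : List (Letter n)) : StepOf R (X ++ u ++ Y) (X ++ v ++ Y) := by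
  obtain ⟨A, B, r1, r2, hr, h1, h2⟩ := h
  exact ⟨X ++ A, B ++ Y, r1, r2, hr, by simp [h1], by simp [h2]⟩

lemma StrongEq.conj {u v : List (Letter n)} (h : StrongEq u v) (X Y : List (Letter n)) :
    StrongEq (X ++ u ++ Y) (X ++ v ++ Y) := by
  induction h with
  | rel a b hab => exact Relation.EqvGen.rel _ _ (hab.conj X Y)
  | refl a => exact Relation.EqvGen.refl _
  | symm a b _ ih => exact ih.symm'
  | trans a b c _ _ ih1 ih2 => exact ih1.trans' ih2

lemma StrongEq.append {u v x y : List (Letter n)} (h : StrongEq u v) (h' : StrongEq x y) :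
    StrongEq (u ++ x) (v ++ y) := by
  have h1 : StrongEq (u ++ x) (v ++ x) := by simpa using h.conj [] x
  have h2 : StrongEq (v ++ x) (v ++ y) := by simpa using h'.conj v []
  exact h1.trans' h2

def seSetoid (n : ℕ) : Setoid (List (Letter n)) :=
  ⟨StrongEq, fun _ => StrongEq.rfl, StrongEq.symm', StrongEq.trans'⟩

/-- Words modulo strong equivalence. -/
def QW (n : ℕ) := Quotient (seSetoid n)

/-- Class of a word. -/
def pw (w : List (Letter n)) : QW n := Quotient.mk (seSetoid n) w

instance : Monoid (QW n) where
  mul := Quotient.map₂ (· ++ ·) (fun _ _ h _ _ h' => h.append h')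
  one := pw []
  mul_assoc := by
    rintro ⟨a⟩ ⟨b⟩ ⟨c⟩
    exact congrArg (pw (n := n)) (List.append_assoc a b c)
  one_mul := by rintro ⟨a⟩; rfl
  mul_one := by rintro ⟨a⟩; exact congrArg (pw (n := n)) (List.append_nil a)

lemma pw_append (u v : List (Letter n)) : pw (u ++ v) = pw u * pw v := rfl

lemma pw_nil : pw ([] : List (Letter n)) = 1 := rfl

lemma pw_eq_iff {u v : List (Letter n)} : pw u = pw v ↔ StrongEq u v := by
  constructor
  · exact fun h => Quotient.exact h
  · exact fun h => Quotient.sound h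

lemma pw_rel {r1 r2 : List (Letter n)} (h : RelStrong n r1 r2) : pw r1 = pw r2 :=
  pw_eq_iff.2 (Relation.EqvGen.rel _ _ ⟨[], [], r1, r2, h, by simp, by simp⟩)

/-- ℕ-indexed generators (1 for out-of-range indices). -/
def tQ (k : ℕ) : QW n := if h : k < n - 1 then pw [Letter.tau ⟨k, h⟩] else 1

def zQ (k : ℕ) : QW n := if h : k < n - 1 then pw [Letter.zeta ⟨k, h⟩] else 1

lemma tQ_valid {k : ℕ} (h : k < n - 1) : (tQ k : QW n) = pw [Letter.tau ⟨k, h⟩] := dif_pos h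

lemma zQ_valid {k : ℕ} (h : k < n - 1) : (zQ k : QW n) = pw [Letter.zeta ⟨k, h⟩] := dif_pos h

lemma tQ_invalid {k : ℕ} (h : ¬ k < n - 1) : (tQ k : QW n) = 1 := dif_neg h

lemma zQ_invalid {k : ℕ} (h : ¬ k < n - 1) : (zQ k : QW n) = 1 := dif_neg h

lemma tQ_of_fin (i : Fin (n-1)) : (tQ i.1 : QW n) = pw [Letter.tau i] := by
  rw [tQ_valid i.2]

lemma zQ_of_fin (i : Fin (n-1)) : (zQ i.1 : QW n) = pw [Letter.zeta i] := by
  rw [zQ_valid i.2]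

/-- pointed relations -/
lemma tt_p (k : ℕ) (x : QW n) : tQ k * (tQ k * x) = x := by
  by_cases h : k < n - 1
  · rw [tQ_valid h, ← mul_assoc, ← pw_append]
    have : pw ([Letter.tau ⟨k, h⟩] ++ [Letter.tau ⟨k, h⟩]) = (1 : QW n) :=
      pw_rel (RelStrong.tt ⟨k, h⟩)
    rw [this, one_mul]
  · rw [tQ_invalid h, one_mul, one_mul]

lemma virt_p (k : ℕ) (x : QW n) : zQ k * (tQ k * x) = tQ k * (zQ k * x) := by
  by_cases h : k < n - 1
  · rw [tQ_valid h, zQ_valid h, ← mul_assoc, ← mul_assoc, ← pw_append, ← pw_append]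
    congr 1
    exact pw_rel (RelStrong.virt ⟨k, h⟩)
  · rw [tQ_invalid h, zQ_invalid h]

lemma fzz_p {k l : ℕ} (h : 2 ≤ Nat.dist k l) (x : QW n) :
    zQ k * (zQ l * x) = zQ l * (zQ k * x) := by
  by_cases hk : k < n - 1
  · by_cases hl : l < n - 1
    · rw [zQ_valid hk, zQ_valid hl, ← mul_assoc, ← mul_assoc, ← pw_append, ← pw_append]
      congr 1
      exact pw_rel (RelStrong.far_zz ⟨k, hk⟩ ⟨l, hl⟩ h)
    · rw [zQ_invalid hl]; simp
  · rw [zQ_invalid hk]; simp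

lemma fzt_p {k l : ℕ} (h : 2 ≤ Nat.dist k l) (x : QW n) :
    zQ k * (tQ l * x) = tQ l * (zQ k * x) := by
  by_cases hk : k < n - 1
  · by_cases hl : l < n - 1
    · rw [zQ_valid hk, tQ_valid hl, ← mul_assoc, ← mul_assoc, ← pw_append, ← pw_append]
      congr 1
      exact pw_rel (RelStrong.far_zt ⟨k, hk⟩ ⟨l, hl⟩ h)
    · rw [tQ_invalid hl]; simp
  · rw [zQ_invalid hk]; simp

lemma ftt_p {k l : ℕ} (h : 2 ≤ Nat.dist k l) (x : QW n) :
    tQ k * (tQ l * x) = tQ l * (tQ k * x) := by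
  by_cases hk : k < n - 1
  · by_cases hl : l < n - 1
    · rw [tQ_valid hk, tQ_valid hl, ← mul_assoc, ← mul_assoc, ← pw_append, ← pw_append]
      congr 1
      exact pw_rel (RelStrong.far_tt ⟨k, hk⟩ ⟨l, hl⟩ h)
    · rw [tQ_invalid hl]; simp
  · rw [tQ_invalid hk]; simp

lemma braid_p {k : ℕ} (hk : k + 1 < n - 1) (x : QW n) :
    tQ k * (tQ (k+1) * (tQ k * x)) = tQ (k+1) * (tQ k * (tQ (k+1) * x)) := by
  have hk' : k < n - 1 := by omega
  rw [tQ_valid hk, tQ_valid hk', ← mul_assoc, ← mul_assoc, ← mul_assoc, ← mul_assoc,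
    ← pw_append, ← pw_append, ← pw_append, ← pw_append]
  congr 1
  exact pw_rel (RelStrong.r3v ⟨k, hk'⟩ ⟨k+1, hk⟩ rfl)

lemma semi_p {k : ℕ} (hk : k + 1 < n - 1) (x : QW n) :
    tQ k * (tQ (k+1) * (zQ k * x)) = zQ (k+1) * (tQ k * (tQ (k+1) * x)) := by
  have hk' : k < n - 1 := by omega
  rw [tQ_valid hk, tQ_valid hk', zQ_valid hk, zQ_valid hk', ← mul_assoc, ← mul_assoc,
    ← mul_assoc, ← mul_assoc, ← pw_append, ← pw_append, ← pw_append, ← pw_append]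
  congr 1
  exact pw_rel (RelStrong.semi ⟨k, hk'⟩ ⟨k+1, hk⟩ rfl)
/-! ### Part 2: ladders and conjugated crossings -/

lemma dist_ge2 {a b : ℕ} (h : a + 2 ≤ b ∨ b + 2 ≤ a) : 2 ≤ Nat.dist a b := by
  rcases h with h | h
  · rw [Nat.dist_eq_sub_of_le (by omega : a ≤ b)]; omega
  · rw [Nat.dist_comm, Nat.dist_eq_sub_of_le (by omega : b ≤ a)]; omega

lemma cancel_t {k : ℕ} {u v : QW n} (h : tQ k * u = tQ k * v) : u = v := by
  have := congrArg (fun y => tQ k * y) h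
  simpa only [tt_p] using this

/-- ladder `τ_p τ_{p+1} ⋯ τ_{p+m-1}` -/
def TupAux : ℕ → ℕ → QW n
  | _, 0 => 1
  | p, m+1 => tQ p * TupAux (p+1) m

/-- ladder `τ_{p+m-1} ⋯ τ_{p+1} τ_p` -/
def TdnAux : ℕ → ℕ → QW n
  | _, 0 => 1
  | p, m+1 => TdnAux (p+1) m * tQ p

lemma Tup_zero (p : ℕ) : (TupAux p 0 : QW n) = 1 := rfl

lemma Tdn_zero (p : ℕ) : (TdnAux p 0 : QW n) = 1 := rfl

lemma Tup_succ_p (p m : ℕ) (x : QW n) :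
    TupAux p (m+1) * x = tQ p * (TupAux (p+1) m * x) := by
  simp [TupAux, mul_assoc]

lemma Tdn_succ_p (p m : ℕ) (x : QW n) :
    TdnAux p (m+1) * x = TdnAux (p+1) m * (tQ p * x) := by
  simp [TdnAux, mul_assoc]

lemma Tup_snoc_p (m : ℕ) : ∀ (p : ℕ) (x : QW n),
    TupAux p (m+1) * x = TupAux p m * (tQ (p+m) * x) := by
  induction m with
  | zero => intro p x; simp [TupAux]
  | succ m IH =>
      intro p x
      rw [Tup_succ_p, IH (p+1), Tup_succ_p]
      ring_nf

lemma Tdn_snoc_p (m : ℕ) : ∀ (p : ℕ) (x : QW n),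
    TdnAux p (m+1) * x = tQ (p+m) * (TdnAux p m * x) := by
  induction m with
  | zero => intro p x; simp [TdnAux]
  | succ m IH =>
      intro p x
      rw [Tdn_succ_p, IH (p+1), Tdn_succ_p]
      ring_nf

lemma TupTdn_p (m : ℕ) : ∀ (p : ℕ) (x : QW n),
    TupAux p m * (TdnAux p m * x) = x := by
  induction m with
  | zero => intro p x; simp [TupAux, TdnAux]
  | succ m IH =>
      intro p x
      rw [Tup_succ_p, Tdn_succ_p, IH (p+1), tt_p]

lemma TdnTup_p (m : ℕ) : ∀ (p : ℕ) (x : QW n),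
    TdnAux p m * (TupAux p m * x) = x := by
  induction m with
  | zero => intro p x; simp [TupAux, TdnAux]
  | succ m IH =>
      intro p x
      rw [Tup_succ_p, Tdn_succ_p, tt_p, IH (p+1)]

lemma far_t_Tup (m : ℕ) : ∀ (p k : ℕ), (k + 2 ≤ p ∨ p + m + 1 ≤ k) → ∀ x : QW n,
    tQ k * (TupAux p m * x) = TupAux p m * (tQ k * x) := by
  induction m with
  | zero => intro p k _ x; simp [TupAux]
  | succ m IH =>
      intro p k h x
      rw [Tup_succ_p, ftt_p (dist_ge2 (by omega)), IH (p+1) k (by omega), Tup_succ_p]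

lemma far_z_Tup (m : ℕ) : ∀ (p k : ℕ), (k + 2 ≤ p ∨ p + m + 1 ≤ k) → ∀ x : QW n,
    zQ k * (TupAux p m * x) = TupAux p m * (zQ k * x) := by
  induction m with
  | zero => intro p k _ x; simp [TupAux]
  | succ m IH =>
      intro p k h x
      rw [Tup_succ_p, fzt_p (dist_ge2 (by omega)), IH (p+1) k (by omega), Tup_succ_p]

lemma far_t_Tdn (m : ℕ) : ∀ (p k : ℕ), (k + 2 ≤ p ∨ p + m + 1 ≤ k) → ∀ x : QW n,
    tQ k * (TdnAux p m * x) = TdnAux p m * (tQ k * x) := by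
  induction m with
  | zero => intro p k _ x; simp [TdnAux]
  | succ m IH =>
      intro p k h x
      rw [Tdn_succ_p, IH (p+1) k (by omega), ftt_p (dist_ge2 (by omega)), Tdn_succ_p]

lemma far_z_Tdn (m : ℕ) : ∀ (p k : ℕ), (k + 2 ≤ p ∨ p + m + 1 ≤ k) → ∀ x : QW n,
    zQ k * (TdnAux p m * x) = TdnAux p m * (zQ k * x) := by
  induction m with
  | zero => intro p k _ x; simp [TdnAux]
  | succ m IH =>
      intro p k h x
      rw [Tdn_succ_p, IH (p+1) k (by omega), fzt_p (dist_ge2 (by omega)), Tdn_succ_p]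

/-- reversed semivirtual relation -/
lemma rsemi_p {k : ℕ} (hk : k + 1 < n - 1) (x : QW n) :
    zQ k * (tQ (k+1) * (tQ k * x)) = tQ (k+1) * (tQ k * (zQ (k+1) * x)) := by
  apply cancel_t (k := k+1)
  apply cancel_t (k := k)
  calc tQ k * (tQ (k+1) * (zQ k * (tQ (k+1) * (tQ k * x))))
      = zQ (k+1) * (tQ k * (tQ (k+1) * (tQ (k+1) * (tQ k * x)))) := semi_p hk _
    _ = zQ (k+1) * x := by rw [tt_p, tt_p]
    _ = tQ k * (tQ (k+1) * (tQ (k+1) * (tQ k * (zQ (k+1) * x)))) := by rw [tt_p, tt_p]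

lemma conj3_p {k : ℕ} (hk : k + 1 < n - 1) (x : QW n) :
    tQ (k+1) * (zQ k * (tQ (k+1) * x)) = tQ k * (zQ (k+1) * (tQ k * x)) := by
  apply cancel_t (k := k)
  calc tQ k * (tQ (k+1) * (zQ k * (tQ (k+1) * x)))
      = zQ (k+1) * (tQ k * (tQ (k+1) * (tQ (k+1) * x))) := semi_p hk _
    _ = zQ (k+1) * (tQ k * x) := by rw [tt_p]
    _ = tQ k * (tQ k * (zQ (k+1) * (tQ k * x))) := by rw [tt_p]
lemma tau_slide_up (m : ℕ) : ∀ (p k : ℕ), p ≤ k → k + 1 < p + m → p + m ≤ n - 1 →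
    ∀ x : QW n, tQ (k+1) * (TupAux p m * x) = TupAux p m * (tQ k * x) := by
  induction m with
  | zero => intro p k h1 h2 _ x; omega
  | succ m IH =>
      intro p k h1 h2 hv x
      rcases eq_or_lt_of_le h1 with rfl | hlt
      · -- k = p, need m ≥ 1
        rcases m with _ | mm
        · omega
        · rw [Tup_succ_p, Tup_succ_p, ← braid_p (by omega),
            far_t_Tup mm (p+2) p (by omega), Tup_succ_p, Tup_succ_p]
      · rw [Tup_succ_p, ftt_p (dist_ge2 (by omega)), IH (p+1) k (by omega) (by omega) (by omega),
          Tup_succ_p]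

lemma zeta_slide_up (m : ℕ) : ∀ (p k : ℕ), p ≤ k → k + 1 < p + m → p + m ≤ n - 1 →
    ∀ x : QW n, zQ (k+1) * (TupAux p m * x) = TupAux p m * (zQ k * x) := by
  induction m with
  | zero => intro p k h1 h2 _ x; omega
  | succ m IH =>
      intro p k h1 h2 hv x
      rcases eq_or_lt_of_le h1 with rfl | hlt
      · rcases m with _ | mm
        · omega
        · rw [Tup_succ_p, Tup_succ_p, ← semi_p (by omega),
            far_z_Tup mm (p+2) p (by omega), Tup_succ_p, Tup_succ_p]
      · rw [Tup_succ_p, fzt_p (dist_ge2 (by omega)), IH (p+1) k (by omega) (by omega) (by omega),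
          Tup_succ_p]

lemma tau_slide_dn (m : ℕ) : ∀ (p k : ℕ), p ≤ k → k + 1 < p + m → p + m ≤ n - 1 →
    ∀ x : QW n, tQ k * (TdnAux p m * x) = TdnAux p m * (tQ (k+1) * x) := by
  induction m with
  | zero => intro p k h1 h2 _ x; omega
  | succ m IH =>
      intro p k h1 h2 hv x
      rcases eq_or_lt_of_le h1 with rfl | hlt
      · rcases m with _ | mm
        · omega
        · rw [Tdn_succ_p, Tdn_succ_p, far_t_Tdn mm (p+2) p (by omega),
            braid_p (by omega), Tdn_succ_p, Tdn_succ_p]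
      · rw [Tdn_succ_p, IH (p+1) k (by omega) (by omega) (by omega),
          ftt_p (dist_ge2 (by omega)), Tdn_succ_p]

lemma zeta_slide_dn (m : ℕ) : ∀ (p k : ℕ), p ≤ k → k + 1 < p + m → p + m ≤ n - 1 →
    ∀ x : QW n, zQ k * (TdnAux p m * x) = TdnAux p m * (zQ (k+1) * x) := by
  induction m with
  | zero => intro p k h1 h2 _ x; omega
  | succ m IH =>
      intro p k h1 h2 hv x
      rcases eq_or_lt_of_le h1 with rfl | hlt
      · rcases m with _ | mm
        · omega
        · rw [Tdn_succ_p, Tdn_succ_p, far_z_Tdn mm (p+2) p (by omega),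
            rsemi_p (by omega), Tdn_succ_p, Tdn_succ_p]
      · rw [Tdn_succ_p, IH (p+1) k (by omega) (by omega) (by omega),
          fzt_p (dist_ge2 (by omega)), Tdn_succ_p]

/-- The crossing of the strands at positions `p` and `p+m+1`. -/
def zzm (p m : ℕ) : QW n := TupAux p m * (zQ (p+m) * TdnAux p m)

lemma zzm_p (p m : ℕ) (x : QW n) :
    zzm p m * x = TupAux p m * (zQ (p+m) * (TdnAux p m * x)) := by
  simp [zzm, mul_assoc]

lemma zzm_zero_p (p : ℕ) (x : QW n) : zzm p 0 * x = zQ p * x := by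
  simp [zzm, TupAux, TdnAux]

lemma zzm_left_p (p m : ℕ) (x : QW n) :
    zzm p (m+1) * x = tQ p * (zzm (p+1) m * (tQ p * x)) := by
  rw [zzm_p, Tup_succ_p, Tdn_succ_p, zzm_p]
  ring_nf

lemma zzm_right_p (p m : ℕ) (hv : p + m + 1 < n - 1) (x : QW n) :
    zzm p (m+1) * x = tQ (p+m+1) * (zzm p m * (tQ (p+m+1) * x)) := by
  rw [zzm_p, zzm_p, far_t_Tup m p (p+m+1) (by omega),
    ← far_t_Tdn m p (p+m+1) (by omega), conj3_p (k := p+m) (by omega),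
    Tup_snoc_p, Tdn_snoc_p]
  ring_nf

/-- far commutation of a letter with `zzm` -/
lemma comm_t_zzm_far (p m k : ℕ) (h : k + 2 ≤ p ∨ p + m + 2 ≤ k) (x : QW n) :
    tQ k * (zzm p m * x) = zzm p m * (tQ k * x) := by
  rw [zzm_p, far_t_Tup m p k (by omega), ← fzt_p (dist_ge2 (by omega)),
    far_t_Tdn m p k (by omega), zzm_p]

lemma comm_z_zzm_far (p m k : ℕ) (h : k + 2 ≤ p ∨ p + m + 2 ≤ k) (x : QW n) :
    zQ k * (zzm p m * x) = zzm p m * (zQ k * x) := by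
  rw [zzm_p, far_z_Tup m p k (by omega), fzz_p (dist_ge2 (by omega)),
    far_z_Tdn m p k (by omega), zzm_p]

/-- commutation of an interior letter with `zzm` -/
lemma comm_t_zzm_mid (p m j : ℕ) (h1 : p ≤ j) (h2 : j + 1 < p + m) (hv : p + m ≤ n - 1)
    (x : QW n) : tQ (j+1) * (zzm p m * x) = zzm p m * (tQ (j+1) * x) := by
  rw [zzm_p, tau_slide_up m p j h1 h2 hv, ← fzt_p (dist_ge2 (by omega)),
    tau_slide_dn m p j h1 h2 hv, zzm_p]

lemma comm_z_zzm_mid (p m j : ℕ) (h1 : p ≤ j) (h2 : j + 1 < p + m) (hv : p + m ≤ n - 1)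
    (x : QW n) : zQ (j+1) * (zzm p m * x) = zzm p m * (zQ (j+1) * x) := by
  rw [zzm_p, zeta_slide_up m p j h1 h2 hv, fzz_p (dist_ge2 (by omega)),
    zeta_slide_dn m p j h1 h2 hv, zzm_p]
/-! ### Part 3: crossings indexed by pairs of positions; the slide theorem -/

def swN (k x : ℕ) : ℕ := if x = k then k + 1 else if x = k + 1 then k else x

def zpair (p q : ℕ) : QW n := if p < q then zzm p (q - p - 1) else zzm q (p - q - 1)

lemma zpair_comm (p q : ℕ) : (zpair p q : QW n) = zpair q p := by
  rcases lt_trichotomy p q with h | rfl | h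
  · rw [zpair, zpair, if_pos h, if_neg (by omega)]
  · rfl
  · rw [zpair, zpair, if_neg (by omega), if_pos h]

lemma zpair_eq (p m : ℕ) : (zpair p (p + m + 1) : QW n) = zzm p m := by
  rw [zpair, if_pos (by omega)]
  congr 1
  omega

lemma zpair_adj_p (p : ℕ) (x : QW n) : zpair p (p + 1) * x = zQ p * x := by
  have h : (zpair p (p+1) : QW n) = zzm p 0 := zpair_eq p 0
  rw [h, zzm_zero_p]

lemma tau_zpair' {k p q : ℕ} (hk : k < n - 1) (h : p < q) (hq : q < n) (x : QW n) :
    (tQ k : QW n) * (zpair (swN k p) (swN k q) * x) = zpair p q * (tQ k * x) := by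
  obtain ⟨m, rfl⟩ : ∃ m, q = p + m + 1 := ⟨q - p - 1, by omega⟩
  rcases (by omega :
      k + 1 < p ∨ k + 1 = p ∨ (k = p ∧ m = 0) ∨ (k = p ∧ 0 < m) ∨
      (p < k ∧ k + 1 < p + m + 1) ∨ (p < k ∧ k + 1 = p + m + 1) ∨ k = p + m + 1 ∨
      p + m + 1 < k) with h1 | h1 | ⟨rfl, rfl⟩ | ⟨rfl, h1⟩ | ⟨h1, h2⟩ | ⟨h1, h2⟩ | rfl | h1
  · -- k+1 < p : far
    rw [show swN k p = p by unfold swN; rw [if_neg (by omega), if_neg (by omega)],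
      show swN k (p+m+1) = p+m+1 by unfold swN; rw [if_neg (by omega), if_neg (by omega)],
      zpair_eq, comm_t_zzm_far p m k (by omega)]
  · -- k+1 = p
    subst h1
    rw [show swN k (k+1) = k by unfold swN; rw [if_neg (by omega), if_pos rfl],
      show swN k (k+1+m+1) = k+1+m+1 by unfold swN; rw [if_neg (by omega), if_neg (by omega)],
      show k+1+m+1 = k+(m+1)+1 by omega, zpair_eq,
      show (zpair (k+1) (k+(m+1)+1) : QW n) = zzm (k+1) m by
        rw [show k+(m+1)+1 = (k+1)+m+1 by omega, zpair_eq],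
      zzm_left_p, tt_p]
  · -- k = p, m = 0
    rw [show swN k k = k + 1 by unfold swN; rw [if_pos rfl],
      show swN k (k+0+1) = k by unfold swN; rw [if_neg (by omega), if_pos (by omega)],
      zpair_comm (k+1) k, show k+0+1 = k+1 by omega, zpair_adj_p, zpair_adj_p, ← virt_p]
  · -- k = p, m ≥ 1
    obtain ⟨mm, rfl⟩ : ∃ mm, m = mm + 1 := ⟨m - 1, by omega⟩
    rw [show swN k k = k + 1 by unfold swN; rw [if_pos rfl],
      show swN k (k+(mm+1)+1) = k+(mm+1)+1 by
        unfold swN; rw [if_neg (by omega), if_neg (by omega)],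
      show (zpair (k+1) (k+(mm+1)+1) : QW n) = zzm (k+1) mm by
        rw [show k+(mm+1)+1 = (k+1)+mm+1 by omega, zpair_eq],
      show (zpair k (k+(mm+1)+1) : QW n) = zzm k (mm+1) by rw [zpair_eq],
      zzm_left_p, tt_p]
  · -- interior
    obtain ⟨j, rfl⟩ : ∃ j, k = j + 1 := ⟨k - 1, by omega⟩
    rw [show swN (j+1) p = p by unfold swN; rw [if_neg (by omega), if_neg (by omega)],
      show swN (j+1) (p+m+1) = p+m+1 by unfold swN; rw [if_neg (by omega), if_neg (by omega)],
      zpair_eq, comm_t_zzm_mid p m j (by omega) (by omega) (by omega)]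
  · -- k+1 = q
    obtain ⟨mm, rfl⟩ : ∃ mm, m = mm + 1 := ⟨m - 1, by omega⟩
    have hkk : k = p + mm + 1 := by omega
    subst hkk
    rw [show swN (p+mm+1) p = p by unfold swN; rw [if_neg (by omega), if_neg (by omega)],
      show swN (p+mm+1) (p+(mm+1)+1) = p+mm+1 by
        unfold swN; rw [if_neg (by omega), if_pos (by omega)],
      show (zpair p (p+mm+1) : QW n) = zzm p mm by rw [zpair_eq],
      zpair_eq, zzm_right_p p mm (by omega), tt_p]
  · -- k = q
    rw [show swN (p+m+1) p = p by unfold swN; rw [if_neg (by omega), if_neg (by omega)],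
      show swN (p+m+1) (p+m+1) = p+m+1+1 by unfold swN; rw [if_pos rfl],
      show (zpair p (p+m+1+1) : QW n) = zzm p (m+1) by
        rw [show p+m+1+1 = p+(m+1)+1 by omega, zpair_eq],
      zpair_eq, zzm_right_p p m (by omega), tt_p]
  · -- k > q : far
    rw [show swN k p = p by unfold swN; rw [if_neg (by omega), if_neg (by omega)],
      show swN k (p+m+1) = p+m+1 by unfold swN; rw [if_neg (by omega), if_neg (by omega)],
      zpair_eq, comm_t_zzm_far p m k (by omega)]

lemma tau_zpair {k p q : ℕ} (hk : k < n - 1) (hne : p ≠ q) (hp : p < n) (hq : q < n)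
    (x : QW n) :
    (tQ k : QW n) * (zpair (swN k p) (swN k q) * x) = zpair p q * (tQ k * x) := by
  rcases hne.lt_or_gt with h | h
  · exact tau_zpair' hk h hq x
  · rw [zpair_comm (swN k p) (swN k q), zpair_comm p q]
    exact tau_zpair' hk h hp x

lemma zeta_zpair' {k p q : ℕ} (h : p < q) (hq : q < n)
    (c1 : k ≠ p) (c2 : k ≠ q) (c3 : k + 1 ≠ p) (c4 : k + 1 ≠ q) (x : QW n) :
    (zQ k : QW n) * (zpair p q * x) = zpair p q * (zQ k * x) := by
  obtain ⟨m, rfl⟩ : ∃ m, q = p + m + 1 := ⟨q - p - 1, by omega⟩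
  rw [zpair_eq]
  rcases (by omega : k + 1 < p ∨ (p < k ∧ k + 1 < p + m + 1) ∨ p + m + 1 < k)
    with h1 | ⟨h1, h2⟩ | h1
  · rw [comm_z_zzm_far p m k (by omega)]
  · obtain ⟨j, rfl⟩ : ∃ j, k = j + 1 := ⟨k - 1, by omega⟩
    rw [comm_z_zzm_mid p m j (by omega) (by omega) (by omega)]
  · rw [comm_z_zzm_far p m k (by omega)]

lemma zeta_zpair {k p q : ℕ} (hne : p ≠ q) (hp : p < n) (hq : q < n)
    (c1 : k ≠ p) (c2 : k ≠ q) (c3 : k + 1 ≠ p) (c4 : k + 1 ≠ q) (x : QW n) :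
    (zQ k : QW n) * (zpair p q * x) = zpair p q * (zQ k * x) := by
  rcases hne.lt_or_gt with h | h
  · exact zeta_zpair' h hq c1 c2 c3 c4 x
  · rw [zpair_comm p q]
    exact zeta_zpair' h hp c2 c1 c4 c3 x
/-! ### Part 4: position evolution and the slide theorem -/

/-- Forward position evolution along a word. -/
def pEv (L : List (Letter n)) (x : Fin n) : Fin n := L.foldl (fun y g => transOf g y) x

lemma pEv_nil (x : Fin n) : pEv [] x = x := rfl

lemma pEv_cons (g : Letter n) (L : List (Letter n)) (x : Fin n) :
    pEv (g :: L) x = pEv L (transOf g x) := rfl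

lemma pEv_append (L1 L2 : List (Letter n)) (x : Fin n) :
    pEv (L1 ++ L2) x = pEv L2 (pEv L1 x) := List.foldl_append ..

lemma permOf_apply (L : List (Letter n)) (x : Fin n) : permOf L x = pEv L x := by
  induction L generalizing x with
  | nil => rfl
  | cons g L IH =>
      rw [pEv_cons, ← IH]
      show ((List.map transOf (g :: L)).reverse.prod) x = _
      rw [List.map_cons, List.reverse_cons, List.prod_append, List.prod_singleton]
      rfl

lemma prefPerm_apply (w : List (Letter n)) (j : ℕ) (x : Fin n) :
    prefPerm w j x = pEv (w.take j) x := permOf_apply _ x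

lemma lo_val (i : Fin (n-1)) : (lo i : Fin n).val = i.val := rfl

lemma hi_val (i : Fin (n-1)) : (hi i : Fin n).val = i.val + 1 := rfl

lemma sPerm_val (i : Fin (n-1)) (x : Fin n) :
    ((sPerm i x : Fin n) : ℕ) = swN i.val x.val := by
  unfold sPerm swN
  by_cases h1 : x = lo i
  · subst h1
    rw [Equiv.swap_apply_left, if_pos (lo_val i), hi_val]
  · by_cases h2 : x = hi i
    · subst h2
      rw [Equiv.swap_apply_right, if_neg, if_pos (hi_val i), lo_val]
      rw [hi_val]
      omega
    · rw [Equiv.swap_apply_of_ne_of_ne h1 h2,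
        if_neg (fun hc => h1 (Fin.ext (by rw [hc, lo_val]))),
        if_neg (fun hc => h2 (Fin.ext (by rw [hc, hi_val])))]

lemma transOf_tau (i : Fin (n-1)) : transOf (Letter.tau i) = sPerm i := rfl

lemma transOf_zeta (i : Fin (n-1)) : transOf (Letter.zeta i) = sPerm i := rfl

/-- The key slide theorem: a crossing of two strands commutes past a word whose
classical letters avoid those strands. -/
lemma slide (N : List (Letter n)) : ∀ (p q : Fin n), p.val ≠ q.val →
    (∀ (j : ℕ) (i : Fin (n-1)), N[j]? = some (Letter.zeta i) →
      (pEv (N.take j) p).val ≠ i.val ∧ (pEv (N.take j) p).val ≠ i.val + 1 ∧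
      (pEv (N.take j) q).val ≠ i.val ∧ (pEv (N.take j) q).val ≠ i.val + 1) →
    ∀ x : QW n,
    pw N * (zpair (pEv N p).val (pEv N q).val * x) = zpair p.val q.val * (pw N * x) := by
  induction N with
  | nil => intro p q hne hcond x; simp [pEv_nil, pw_nil]
  | cons g N IH =>
      intro p q hne hcond x
      have hne' : (transOf g p).val ≠ (transOf g q).val := by
        intro hc
        exact hne (congrArg Fin.val ((transOf g).injective (Fin.ext hc)))
      have hcond' : ∀ (j : ℕ) (i : Fin (n-1)), N[j]? = some (Letter.zeta i) →
          (pEv (N.take j) (transOf g p)).val ≠ i.val ∧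
          (pEv (N.take j) (transOf g p)).val ≠ i.val + 1 ∧
          (pEv (N.take j) (transOf g q)).val ≠ i.val ∧
          (pEv (N.take j) (transOf g q)).val ≠ i.val + 1 := by
        intro j i hj
        have := hcond (j+1) i (by simpa using hj)
        simpa [List.take_succ_cons, pEv_cons] using this
      have hgN : pw (g :: N) = pw [g] * pw N := rfl
      rw [hgN, mul_assoc, mul_assoc, pEv_cons, pEv_cons,
        IH (transOf g p) (transOf g q) hne' hcond' x]
      -- step: pw [g] * (zpair p' q' * Y) = zpair p q * (pw [g] * Y)
      cases g with
      | tau i =>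
          rw [← tQ_of_fin,
            show ((transOf (Letter.tau i) p : Fin n) : ℕ) = swN i.val p.val from sPerm_val i p,
            show ((transOf (Letter.tau i) q : Fin n) : ℕ) = swN i.val q.val from sPerm_val i q]
          exact tau_zpair i.2 hne p.isLt q.isLt _
      | zeta i =>
          obtain ⟨c1, c2, c3, c4⟩ := hcond 0 i (by simp)
          simp only [List.take_zero, pEv_nil] at c1 c2 c3 c4
          have hp' : transOf (Letter.zeta i) p = p :=
            Equiv.swap_apply_of_ne_of_ne (fun hc => c1 (congrArg Fin.val hc))
              (fun hc => c2 (congrArg Fin.val hc))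
          have hq' : transOf (Letter.zeta i) q = q :=
            Equiv.swap_apply_of_ne_of_ne (fun hc => c3 (congrArg Fin.val hc))
              (fun hc => c4 (congrArg Fin.val hc))
          rw [hp', hq', ← zQ_of_fin]
          exact zeta_zpair hne p.isLt q.isLt (Ne.symm c1) (Ne.symm c3) (Ne.symm c2)
            (Ne.symm c4) _
/-! ### Part 5a: utilities for the main argument -/

lemma strandsAt_of {w : List (Letter n)} {j : ℕ} {i : Fin (n-1)}
    (h : w[j]? = some (Letter.zeta i)) :
    strandsAt w j = some s((prefPerm w j)⁻¹ (lo i), (prefPerm w j)⁻¹ (hi i)) := by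
  simp [strandsAt, h, Letter.idx]

lemma decomp (w : List (Letter n)) (a b c : ℕ) (g1 g2 g3 : Letter n) (hab : a < b)
    (hbc : b < c) (h1 : w[a]? = some g1) (h2 : w[b]? = some g2) (h3 : w[c]? = some g3) :
    ∃ A M1 M2 B : List (Letter n),
      w = A ++ g1 :: (M1 ++ g2 :: (M2 ++ g3 :: B)) ∧
      A.length = a ∧ M1.length = b - a - 1 ∧ M2.length = c - b - 1 := by
  obtain ⟨hc, hgc⟩ := List.getElem?_eq_some_iff.1 h3
  obtain ⟨hb', hgb⟩ := List.getElem?_eq_some_iff.1 h2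
  obtain ⟨ha', hga⟩ := List.getElem?_eq_some_iff.1 h1
  refine ⟨w.take a, (w.drop (a+1)).take (b-(a+1)), (w.drop (b+1)).take (c-(b+1)),
    w.drop (c+1), ?_, ?_, ?_, ?_⟩
  · have e3 : w.drop (b+1) = (w.drop (b+1)).take (c-(b+1)) ++ g3 :: w.drop (c+1) := by
      conv_lhs => rw [← List.take_append_drop (c-(b+1)) (w.drop (b+1))]
      rw [List.drop_drop, show b+1+(c-(b+1)) = c by omega, List.drop_eq_getElem_cons hc, hgc]
    have e2 : w.drop (a+1) = (w.drop (a+1)).take (b-(a+1)) ++ g2 :: w.drop (b+1) := by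
      conv_lhs => rw [← List.take_append_drop (b-(a+1)) (w.drop (a+1))]
      rw [List.drop_drop, show a+1+(b-(a+1)) = b by omega, List.drop_eq_getElem_cons hb', hgb]
    conv_lhs => rw [← List.take_append_drop a w, List.drop_eq_getElem_cons ha', hga, e2, e3]
  · simp [List.length_take]; omega
  · simp [List.length_take, List.length_drop]; omega
  · simp [List.length_take, List.length_drop]; omega

lemma delete2_append (A M R : List (Letter n)) (g h : Letter n) (x y : ℕ)
    (hx : x = A.length) (hy : y = A.length + M.length + 1) :
    delete2 (A ++ g :: (M ++ h :: R)) x y = A ++ (M ++ R) := by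
  have hre : A ++ g :: (M ++ h :: R) = (A ++ g :: M) ++ (h :: R) := by simp
  rw [delete2, max_eq_right (by omega : x ≤ y), min_eq_left (by omega : x ≤ y), hre,
    List.eraseIdx_append_of_length_le (by simp; omega),
    show y - (A ++ g :: M).length = 0 by simp; omega]
  simp only [List.eraseIdx_cons_zero]
  rw [show (A ++ g :: M) ++ R = A ++ (g :: (M ++ R)) by simp,
    List.eraseIdx_append_of_length_le (by omega),
    show x - A.length = 0 by omega]
  simp

lemma delete2_symm (w : List (Letter n)) (x y : ℕ) : delete2 w x y = delete2 w y x := by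
  rw [delete2, delete2, max_comm, min_comm]

lemma pw_cons (g : Letter n) (L : List (Letter n)) : pw (g :: L) = pw [g] * pw L := rfl

lemma fin_ne_of_val_ne' {x y : Fin n} (h : x ≠ y) : x.val ≠ y.val :=
  fun hc => h (Fin.ext hc)

theorem Equiv.Perm.inv_apply_self (σ : Equiv.Perm (Fin n)) (x : Fin n) : σ⁻¹ (σ x) = x :=
  Equiv.symm_apply_apply σ x

theorem Equiv.Perm.apply_inv_self (σ : Equiv.Perm (Fin n)) (x : Fin n) : σ (σ⁻¹ x) = x :=
  Equiv.apply_symm_apply σ x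

lemma apply_ne_of_ne_inv {σ : Equiv.Perm (Fin n)} {x y : Fin n} (h : x ≠ σ⁻¹ y) :
    σ x ≠ y := fun hc => h (by rw [← hc, Equiv.Perm.inv_apply_self])

lemma zeta_lo (i : Fin (n-1)) : transOf (Letter.zeta i) (lo i) = hi i :=
  Equiv.swap_apply_left _ _

lemma zeta_hi (i : Fin (n-1)) : transOf (Letter.zeta i) (hi i) = lo i :=
  Equiv.swap_apply_right _ _
/-! ### Part 5b: the main case -/

lemma take_append_le {α : Type*} {l₁ l₂ : List α} {j : ℕ} (h : j ≤ l₁.length) :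
    (l₁ ++ l₂).take j = l₁.take j := by
  rw [List.take_append, show j - l₁.length = 0 by omega]
  simp

lemma pEv_single (g : Letter n) (x : Fin n) : pEv [g] x = transOf g x := rfl

lemma main_case (w : List (Letter n)) (a b c : ℕ) (hab : a < b) (hbc : b < c)
    (h1 : IsBigon w a b) (h2 : IsBigon w b c) :
    StrongEq (delete2 w a b) (delete2 w b c) := by
  obtain ⟨-, ha, hb, hstr1, hav1⟩ := h1
  obtain ⟨-, -, hc, hstr2, hav2⟩ := h2
  obtain ⟨i1, hi1⟩ := ha
  obtain ⟨i2, hi2⟩ := hb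
  obtain ⟨i3, hi3⟩ := hc
  obtain ⟨A, M1, M2, B, hw, hA, hM1, hM2⟩ := decomp w a b c _ _ _ hab hbc hi1 hi2 hi3
  subst hw
  set W : List (Letter n) :=
    A ++ Letter.zeta i1 :: (M1 ++ Letter.zeta i2 :: (M2 ++ Letter.zeta i3 :: B)) with hWdef
  have hbL : b = a + 1 + M1.length := by omega
  have hcL : c = b + 1 + M2.length := by omega
  -- take computations
  have hta : W.take a = A := by rw [hWdef]; exact List.take_left' hA
  have htb : W.take b = A ++ Letter.zeta i1 :: M1 := by
    rw [hWdef, show A ++ Letter.zeta i1 :: (M1 ++ Letter.zeta i2 :: (M2 ++ Letter.zeta i3 :: B))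
      = (A ++ Letter.zeta i1 :: M1) ++ (Letter.zeta i2 :: (M2 ++ Letter.zeta i3 :: B)) by simp]
    exact List.take_left' (by simp [hA]; all_goals omega)
  have htc : W.take c = (A ++ Letter.zeta i1 :: M1) ++ Letter.zeta i2 :: M2 := by
    rw [hWdef, show A ++ Letter.zeta i1 :: (M1 ++ Letter.zeta i2 :: (M2 ++ Letter.zeta i3 :: B))
      = ((A ++ Letter.zeta i1 :: M1) ++ Letter.zeta i2 :: M2) ++ (Letter.zeta i3 :: B) by simp]
    exact List.take_left' (by simp [hA]; all_goals omega)
  set u := (prefPerm W a)⁻¹ (lo i1) with hu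
  set v := (prefPerm W a)⁻¹ (hi i1) with hv
  set P := pEv M1 (hi i1) with hPdef
  set Q := pEv M1 (lo i1) with hQdef
  have hAu : pEv A u = lo i1 := by
    have h' : prefPerm W a u = lo i1 := Equiv.Perm.apply_inv_self _ _
    rwa [prefPerm_apply, hta] at h'
  have hAv : pEv A v = hi i1 := by
    have h' : prefPerm W a v = hi i1 := Equiv.Perm.apply_inv_self _ _
    rwa [prefPerm_apply, hta] at h'
  have hub' : pEv (A ++ Letter.zeta i1 :: M1) u = P := by
    rw [pEv_append, hAu, pEv_cons, zeta_lo]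
  have hvb' : pEv (A ++ Letter.zeta i1 :: M1) v = Q := by
    rw [pEv_append, hAv, pEv_cons, zeta_hi]
  have hub : prefPerm W b u = P := by rw [prefPerm_apply, htb]; exact hub'
  have hvb : prefPerm W b v = Q := by rw [prefPerm_apply, htb]; exact hvb'
  have hsa : strandsAt W a = some s(u, v) := strandsAt_of hi1
  have hsb := strandsAt_of hi2
  have hsc := strandsAt_of hi3
  have hpair_b : (P = lo i2 ∧ Q = hi i2) ∨ (P = hi i2 ∧ Q = lo i2) := by
    have heq : s(u, v) = s((prefPerm W b)⁻¹ (lo i2), (prefPerm W b)⁻¹ (hi i2)) := by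
      have h' := hstr1
      rw [hsa, hsb] at h'
      exact Option.some.inj h'
    rcases Sym2.eq_iff.1 heq with ⟨e1, e2⟩ | ⟨e1, e2⟩
    · exact Or.inl ⟨by rw [← hub, e1, Equiv.Perm.apply_inv_self],
        by rw [← hvb, e2, Equiv.Perm.apply_inv_self]⟩
    · exact Or.inr ⟨by rw [← hub, e1, Equiv.Perm.apply_inv_self],
        by rw [← hvb, e2, Equiv.Perm.apply_inv_self]⟩
  have hz2 : transOf (Letter.zeta i2) P = Q ∧ transOf (Letter.zeta i2) Q = P := by
    rcases hpair_b with ⟨e1, e2⟩ | ⟨e1, e2⟩ <;> rw [e1, e2]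
    · exact ⟨zeta_lo i2, zeta_hi i2⟩
    · exact ⟨zeta_hi i2, zeta_lo i2⟩
  have hXu : pEv ((A ++ Letter.zeta i1 :: M1) ++ [Letter.zeta i2]) u = Q := by
    rw [pEv_append, hub', pEv_single, hz2.1]
  have hXv : pEv ((A ++ Letter.zeta i1 :: M1) ++ [Letter.zeta i2]) v = P := by
    rw [pEv_append, hvb', pEv_single, hz2.2]
  have huc : prefPerm W c u = pEv M2 Q := by
    rw [prefPerm_apply, htc, show (A ++ Letter.zeta i1 :: M1) ++ Letter.zeta i2 :: M2
      = ((A ++ Letter.zeta i1 :: M1) ++ [Letter.zeta i2]) ++ M2 by simp, pEv_append, hXu]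
  have hvc : prefPerm W c v = pEv M2 P := by
    rw [prefPerm_apply, htc, show (A ++ Letter.zeta i1 :: M1) ++ Letter.zeta i2 :: M2
      = ((A ++ Letter.zeta i1 :: M1) ++ [Letter.zeta i2]) ++ M2 by simp, pEv_append, hXv]
  have hsb' : strandsAt W b = some s(u, v) := by rw [← hstr1, hsa]
  have hpair_c : (pEv M2 Q = lo i3 ∧ pEv M2 P = hi i3) ∨
      (pEv M2 Q = hi i3 ∧ pEv M2 P = lo i3) := by
    have heq : s(u, v) = s((prefPerm W c)⁻¹ (lo i3), (prefPerm W c)⁻¹ (hi i3)) := by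
      have h' := hstr2
      rw [hsb', hsc] at h'
      exact Option.some.inj h'
    rcases Sym2.eq_iff.1 heq with ⟨e1, e2⟩ | ⟨e1, e2⟩
    · exact Or.inl ⟨by rw [← huc, e1, Equiv.Perm.apply_inv_self],
        by rw [← hvc, e2, Equiv.Perm.apply_inv_self]⟩
    · exact Or.inr ⟨by rw [← huc, e1, Equiv.Perm.apply_inv_self],
        by rw [← hvc, e2, Equiv.Perm.apply_inv_self]⟩
  have hNu : pEv (M1 ++ M2) (lo i1) = pEv M2 Q := by rw [pEv_append]
  have hNv : pEv (M1 ++ M2) (hi i1) = pEv M2 P := by rw [pEv_append]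
  -- the slide hypotheses
  have hcond : ∀ (j : ℕ) (i : Fin (n-1)), (M1 ++ M2)[j]? = some (Letter.zeta i) →
      (pEv ((M1 ++ M2).take j) (lo i1)).val ≠ i.val ∧
      (pEv ((M1 ++ M2).take j) (lo i1)).val ≠ i.val + 1 ∧
      (pEv ((M1 ++ M2).take j) (hi i1)).val ≠ i.val ∧
      (pEv ((M1 ++ M2).take j) (hi i1)).val ≠ i.val + 1 := by
    intro j i hj
    have hjl : j < M1.length + M2.length := by
      have := (List.getElem?_eq_some_iff.1 hj).1
      simpa using this
    rcases lt_or_ge j M1.length with hjM | hjM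
    · -- crossing inside M1
      have hM1j : M1[j]? = some (Letter.zeta i) := by
        rwa [List.getElem?_append_left hjM] at hj
      have htj : (M1 ++ M2).take j = M1.take j := take_append_le hjM.le
      have hre : W = (A ++ [Letter.zeta i1]) ++
          (M1 ++ Letter.zeta i2 :: (M2 ++ Letter.zeta i3 :: B)) := by simp [hWdef]
      have hWk : W[a+1+j]? = some (Letter.zeta i) := by
        rw [hre, List.getElem?_append_right (by simp [hA]; all_goals omega),
          show a+1+j - (A ++ [Letter.zeta i1]).length = j by simp [hA],
          List.getElem?_append_left hjM]
        exact hM1j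
      have htk : W.take (a+1+j) = (A ++ [Letter.zeta i1]) ++ M1.take j := by
        rw [hre, show a+1+j = (A ++ [Letter.zeta i1]).length + j by simp [hA], List.take_length_add_append,
          take_append_le hjM.le]
      have hpu : pEv (A ++ [Letter.zeta i1]) u = hi i1 := by
        rw [pEv_append, hAu, pEv_single, zeta_lo]
      have hpv : pEv (A ++ [Letter.zeta i1]) v = lo i1 := by
        rw [pEv_append, hAv, pEv_single, zeta_hi]
      have hku : prefPerm W (a+1+j) u = pEv (M1.take j) (hi i1) := by
        rw [prefPerm_apply, htk, pEv_append, hpu]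
      have hkv : prefPerm W (a+1+j) v = pEv (M1.take j) (lo i1) := by
        rw [prefPerm_apply, htk, pEv_append, hpv]
      have hav := hav1 (a+1+j) (by omega) (by omega) ⟨i, hWk⟩ s(u, v) _ hsa (strandsAt_of hWk)
      have h1' := hav u (Sym2.mem_iff.2 (Or.inl rfl))
      have h2' := hav v (Sym2.mem_iff.2 (Or.inr rfl))
      rw [Sym2.mem_iff] at h1' h2'
      push_neg at h1' h2'
      refine ⟨?_, ?_, ?_, ?_⟩
      · rw [htj, ← hkv]
        simpa [lo_val] using fin_ne_of_val_ne' (apply_ne_of_ne_inv h2'.1)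
      · rw [htj, ← hkv]
        simpa [hi_val] using fin_ne_of_val_ne' (apply_ne_of_ne_inv h2'.2)
      · rw [htj, ← hku]
        simpa [lo_val] using fin_ne_of_val_ne' (apply_ne_of_ne_inv h1'.1)
      · rw [htj, ← hku]
        simpa [hi_val] using fin_ne_of_val_ne' (apply_ne_of_ne_inv h1'.2)
    · -- crossing inside M2
      set j' := j - M1.length with hj'def
      have hjj : j = M1.length + j' := by omega
      have hj'l : j' < M2.length := by omega
      have hj2 : M2[j']? = some (Letter.zeta i) := by
        rw [hjj] at hj
        rwa [List.getElem?_append_right (by omega),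
          show M1.length + j' - M1.length = j' by omega] at hj
      have htj : (M1 ++ M2).take j = M1 ++ M2.take j' := by
        rw [hjj, List.take_length_add_append]
      have hre : W = ((A ++ Letter.zeta i1 :: M1) ++ [Letter.zeta i2]) ++
          (M2 ++ Letter.zeta i3 :: B) := by simp [hWdef]
      have hXlen : ((A ++ Letter.zeta i1 :: M1) ++ [Letter.zeta i2]).length = b + 1 := by
        simp [hA]; all_goals omega
      have hWk : W[b+1+j']? = some (Letter.zeta i) := by
        rw [hre, List.getElem?_append_right (by omega),
          show b+1+j' - ((A ++ Letter.zeta i1 :: M1) ++ [Letter.zeta i2]).length = j' by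
            rw [hXlen]; omega,
          List.getElem?_append_left hj'l]
        exact hj2
      have htk : W.take (b+1+j') =
          ((A ++ Letter.zeta i1 :: M1) ++ [Letter.zeta i2]) ++ M2.take j' := by
        rw [hre, show b+1+j' = ((A ++ Letter.zeta i1 :: M1) ++ [Letter.zeta i2]).length + j' by
            rw [hXlen], List.take_length_add_append, take_append_le hj'l.le]
      have hku : prefPerm W (b+1+j') u = pEv (M2.take j') Q := by
        rw [prefPerm_apply, htk, pEv_append, hXu]
      have hkv : prefPerm W (b+1+j') v = pEv (M2.take j') P := by
        rw [prefPerm_apply, htk, pEv_append, hXv]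
      have hav := hav2 (b+1+j') (by omega) (by omega) ⟨i, hWk⟩ s(u, v) _ hsb' (strandsAt_of hWk)
      have h1' := hav u (Sym2.mem_iff.2 (Or.inl rfl))
      have h2' := hav v (Sym2.mem_iff.2 (Or.inr rfl))
      rw [Sym2.mem_iff] at h1' h2'
      push_neg at h1' h2'
      refine ⟨?_, ?_, ?_, ?_⟩
      · rw [htj, pEv_append, ← hku]
        simpa [lo_val] using fin_ne_of_val_ne' (apply_ne_of_ne_inv h1'.1)
      · rw [htj, pEv_append, ← hku]
        simpa [hi_val] using fin_ne_of_val_ne' (apply_ne_of_ne_inv h1'.2)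
      · rw [htj, pEv_append, ← hkv]
        simpa [lo_val] using fin_ne_of_val_ne' (apply_ne_of_ne_inv h2'.1)
      · rw [htj, pEv_append, ← hkv]
        simpa [hi_val] using fin_ne_of_val_ne' (apply_ne_of_ne_inv h2'.2)
  -- apply the slide theorem
  have hne : ((lo i1 : Fin n) : ℕ) ≠ ((hi i1 : Fin n) : ℕ) := by
    rw [lo_val, hi_val]; omega
  have hkey := slide (M1 ++ M2) (lo i1) (hi i1) hne hcond (pw B)
  rw [hNu, hNv, lo_val, hi_val, zpair_adj_p] at hkey
  have hz3 : zpair ((pEv M2 Q : Fin n) : ℕ) ((pEv M2 P : Fin n) : ℕ) * pw B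
      = zQ (i3 : ℕ) * pw B := by
    rcases hpair_c with ⟨e1, e2⟩ | ⟨e1, e2⟩
    · rw [e1, e2, lo_val, hi_val, zpair_adj_p]
    · rw [e1, e2, lo_val, hi_val, zpair_comm, zpair_adj_p]
  rw [hz3] at hkey
  -- compute the two reductions
  have d1 : delete2 W a b = A ++ (M1 ++ (M2 ++ Letter.zeta i3 :: B)) := by
    rw [hWdef]
    exact delete2_append A M1 _ _ _ a b hA.symm (by omega)
  have d2 : delete2 W b c = (A ++ Letter.zeta i1 :: M1) ++ (M2 ++ B) := by
    rw [hWdef, show A ++ Letter.zeta i1 :: (M1 ++ Letter.zeta i2 :: (M2 ++ Letter.zeta i3 :: B))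
      = (A ++ Letter.zeta i1 :: M1) ++ Letter.zeta i2 :: (M2 ++ Letter.zeta i3 :: B) by simp]
    exact delete2_append _ M2 B _ _ b c (by simp [hA]; all_goals omega) (by simp [hA]; all_goals omega)
  rw [d1, d2]
  apply pw_eq_iff.1
  rw [zQ_of_fin, zQ_of_fin] at hkey
  rw [show A ++ (M1 ++ (M2 ++ Letter.zeta i3 :: B))
      = A ++ ((M1 ++ M2) ++ ([Letter.zeta i3] ++ B)) by simp,
    show (A ++ Letter.zeta i1 :: M1) ++ (M2 ++ B)
      = A ++ ([Letter.zeta i1] ++ ((M1 ++ M2) ++ B)) by simp]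
  simp only [pw_append] at hkey ⊢
  rw [hkey]
/-! ### Part 6: the theorem -/

lemma no_between {w : List (Letter n)} {a k b : ℕ} (h : IsBigon w a b) (hk : a < k)
    (hk2 : k < b) (hkz : k ∈ ZetaPos w) (hstr : strandsAt w k = strandsAt w a) : False := by
  obtain ⟨-, ha, -, -, hav⟩ := h
  obtain ⟨i, hi⟩ := ha
  have hsa := strandsAt_of hi
  have h' := hav k hk hk2 hkz _ _ hsa (by rw [hstr, hsa])
  exact h' _ (Sym2.mem_iff.2 (Or.inl rfl)) (Sym2.mem_iff.2 (Or.inl rfl))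

theorem bigons_sharing_vertex' (w : List (Letter n)) (x x' x'' : ℕ)
    (hne : x' ≠ x'')
    (h1 : IsBigon w (min x x') (max x x'))
    (h2 : IsBigon w (min x x'') (max x x'')) :
    StrongEq (delete2 w x x') (delete2 w x x'') := by
  have hxx' : x ≠ x' := by
    intro h; rw [h] at h1; exact absurd h1.1 (by omega)
  have hxx'' : x ≠ x'' := by
    intro h; rw [h] at h2; exact absurd h2.1 (by omega)
  rcases (by omega : (x < x' ∧ x' < x'') ∨ (x < x'' ∧ x'' < x') ∨ (x' < x ∧ x < x'') ∨
      (x'' < x ∧ x < x') ∨ (x' < x'' ∧ x'' < x) ∨ (x'' < x' ∧ x' < x)) with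
    ⟨ha, hb⟩ | ⟨ha, hb⟩ | ⟨ha, hb⟩ | ⟨ha, hb⟩ | ⟨ha, hb⟩ | ⟨ha, hb⟩
  · -- x < x' < x''
    rw [min_eq_left ha.le, max_eq_right ha.le] at h1
    rw [min_eq_left (by omega : x ≤ x''), max_eq_right (by omega : x ≤ x'')] at h2
    exact absurd (no_between h2 ha hb h1.2.2.1 h1.2.2.2.1.symm) not_false
  · -- x < x'' < x'
    rw [min_eq_left (by omega : x ≤ x'), max_eq_right (by omega : x ≤ x')] at h1
    rw [min_eq_left ha.le, max_eq_right ha.le] at h2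
    exact absurd (no_between h1 ha hb h2.2.2.1 h2.2.2.2.1.symm) not_false
  · -- x' < x < x'' : main case
    rw [min_eq_right ha.le, max_eq_left ha.le] at h1
    rw [min_eq_left hb.le, max_eq_right hb.le] at h2
    rw [delete2_symm w x x']
    exact main_case w x' x x'' ha hb h1 h2
  · -- x'' < x < x' : mirrored main case
    rw [min_eq_left hb.le, max_eq_right hb.le] at h1
    rw [min_eq_right ha.le, max_eq_left ha.le] at h2
    rw [delete2_symm w x x'']
    exact (main_case w x'' x x' ha hb h2 h1).symm'
  · -- x' < x'' < x
    rw [min_eq_right (by omega : x' ≤ x), max_eq_left (by omega : x' ≤ x)] at h1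
    rw [min_eq_right hb.le, max_eq_left hb.le] at h2
    exact absurd (no_between h1 ha hb h2.2.1
      (h2.2.2.2.1.trans h1.2.2.2.1.symm)) not_false
  · -- x'' < x' < x
    rw [min_eq_right hb.le, max_eq_left hb.le] at h1
    rw [min_eq_right (by omega : x'' ≤ x), max_eq_left (by omega : x'' ≤ x)] at h2
    exact absurd (no_between h2 ha hb h1.2.1
      (h1.2.2.2.1.trans h2.2.2.2.1.symm)) not_false

/-- if `x, x'` form a bigon and `x, x''` form a bigon (sharing the
crossing `x`), then the two bigon reductions give strongly equivalent words. -/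
theorem bigons_sharing_vertex (n : ℕ) (w : List (Letter n)) (x x' x'' : ℕ)
    (hne : x' ≠ x'')
    (h1 : IsBigon w (min x x') (max x x'))
    (h2 : IsBigon w (min x x'') (max x x'')) :
    StrongEq (delete2 w x x') (delete2 w x x'') :=
  bigons_sharing_vertex' w x x' x'' hne h1 h2

end OneTermBracket
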